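/- Let X be a metric space, let I ⊔ J be a partition of {1,…,n}, let w_1,…,w_n be positive weights summing to 1 with W_I = ∑_{i∈I} w_i = 1/2, let K be a nonempty bounded subset of X containing z_j for all j ∈ J, and suppose all contaminated points are equal to a single point z' ∈ X. Define F'(z) = ∑_{j∈J} w_j d(z, z_j) + (1/2) · d(z, z'). Then (1/2) d(z', K) ≤ inf_{z∈X} F'(z) and F'(z') ≤ (1/2) d(z', K) + (1/2) diam(K); consequently F'(z') ≤ inf_{z∈X} F'(z) + (1/2) diam(K), so z' is a near-minimizer whose distance to K can be made arbitrarily large. -/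

import Mathlib

open scoped BigOperators

/-- Breakdown, boundary case `W_I = 1/2`. If the contaminated
weight is exactly `1/2` and all contaminated points equal a single point `z'`,
then `(1/2) d(z',K) ≤ inf_z F'(z)`, `F'(z') ≤ (1/2) d(z',K) + (1/2) diam(K)`,
and consequently `F'(z') ≤ inf_z F'(z) + (1/2) diam(K)`: `z'` is a
near-minimizer whose distance to `K` can be arbitrarily large. -/
theorem median_near_minimizer_of_contamination_eq_half
    {X : Type*} [MetricSpace X]
    {n : ℕ} (I J : Finset (Fin n))
    (hdisj : Disjoint I J) (hcover : I ∪ J = Finset.univ)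
    (w : Fin n → ℝ) (hw : ∀ i, 0 < w i) (hsum : ∑ i, w i = 1)
    (hWI : ∑ i ∈ I, w i = 1 / 2)
    (K : Set X) (hK : K.Nonempty) (hKb : Bornology.IsBounded K)
    (z : Fin n → X) (hz : ∀ j ∈ J, z j ∈ K)
    (z' : X) :
    (1 / 2) * Metric.infDist z' K ≤
        (⨅ p : X, (∑ j ∈ J, w j * dist p (z j)) + (1 / 2) * dist p z') ∧
      (∑ j ∈ J, w j * dist z' (z j)) + (1 / 2) * dist z' z' ≤
        (1 / 2) * Metric.infDist z' K + (1 / 2) * Metric.diam K ∧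
      (∑ j ∈ J, w j * dist z' (z j)) + (1 / 2) * dist z' z' ≤
        (⨅ p : X, (∑ j ∈ J, w j * dist p (z j)) + (1 / 2) * dist p z') +
          (1 / 2) * Metric.diam K := by
  have hJsum : ∑ j ∈ J, w j = 1 / 2 := by
    have h := Finset.sum_union hdisj (f := w)
    rw [hcover, hsum, hWI] at h
    linarith
  -- Lower bound on the infimum
  have h1 : (1 / 2) * Metric.infDist z' K ≤
      (⨅ p : X, (∑ j ∈ J, w j * dist p (z j)) + (1 / 2) * dist p z') := by
    have : Nonempty X := ⟨z'⟩
    apply le_ciInf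
    intro p
    have key : ∀ j ∈ J, w j * Metric.infDist z' K ≤
        w j * dist p (z j) + w j * dist p z' := by
      intro j hj
      have h1 : Metric.infDist z' K ≤ dist z' (z j) :=
        Metric.infDist_le_dist_of_mem (hz j hj)
      have h2 : dist z' (z j) ≤ dist p z' + dist p (z j) := by
        rw [dist_comm p z']
        exact dist_triangle _ _ _
      nlinarith [(hw j).le]
    calc (1 / 2) * Metric.infDist z' K
        = ∑ j ∈ J, w j * Metric.infDist z' K := by
          rw [← Finset.sum_mul, hJsum]
      _ ≤ ∑ j ∈ J, (w j * dist p (z j) + w j * dist p z') :=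
          Finset.sum_le_sum key
      _ = (∑ j ∈ J, w j * dist p (z j)) + (1 / 2) * dist p z' := by
          rw [Finset.sum_add_distrib, ← Finset.sum_mul, hJsum]
  have h2 : (∑ j ∈ J, w j * dist z' (z j)) + (1 / 2) * dist z' z' ≤
      (1 / 2) * Metric.infDist z' K + (1 / 2) * Metric.diam K := by
    rw [dist_self, mul_zero, add_zero]
    have key : ∀ j ∈ J, w j * dist z' (z j) ≤
        w j * (Metric.infDist z' K + Metric.diam K) := by
      intro j hj
      have hle : dist z' (z j) ≤ Metric.infDist z' K + Metric.diam K :=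
        Metric.dist_le_infDist_add_diam hKb (hz j hj)
      exact mul_le_mul_of_nonneg_left hle (hw j).le
    calc ∑ j ∈ J, w j * dist z' (z j)
        ≤ ∑ j ∈ J, w j * (Metric.infDist z' K + Metric.diam K) :=
          Finset.sum_le_sum key
      _ = (1 / 2) * (Metric.infDist z' K + Metric.diam K) := by
          rw [← Finset.sum_mul, hJsum]
      _ = (1 / 2) * Metric.infDist z' K + (1 / 2) * Metric.diam K := by ring
  exact ⟨h1, h2, h2.trans (by linarith)⟩
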